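/- Let X be a compact topometric space with lower semi-continuous metric d, μ a regular Borel probability measure on X, and δ > 0. Suppose every closed set C ⊆ X with μ(C) > 0 contains a closed subset C' with μ(C') > 0 and diam(C') ≤ δ. Then there is a countable family (C_i)_{i∈I} of pairwise disjoint closed sets, each with μ(C_i) > 0 and diam(C_i) ≤ δ, such that μ(⋃_{i∈I} C_i) = 1, and hence μ = Σ_{i∈I} μ(C_i) · μ_{C_i}. -/

import Mathlib

open MeasureTheory

/-- Abstract form of Theorem B: on a compact topometric space, if every closed set of
positive measure contains a closed subset of positive measure and diameter at most `δ`,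
then `μ` decomposes as a countable weighted sum of localizations at pairwise disjoint
closed sets of diameter at most `δ`. -/
theorem measure_decomposition_small_diameter
    {X : Type*} [TopologicalSpace X] [CompactSpace X] [T2Space X]
    [MeasurableSpace X] [BorelSpace X]
    (d : X → X → ℝ)
    (hsymm : ∀ p q, d p q = d q p)
    (hzero : ∀ p q, d p q = 0 ↔ p = q)
    (htri : ∀ p q t, d p t ≤ d p q + d q t)
    (hrefine : ∀ U : Set X, IsOpen U → ∀ p ∈ U, ∃ ε > 0, ∀ q, d p q < ε → q ∈ U)
    (hlsc : ∀ ε : ℝ, 0 < ε → IsClosed {pq : X × X | d pq.1 pq.2 ≤ ε})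
    (μ : Measure X) [IsProbabilityMeasure μ] [μ.Regular]
    (δ : ℝ) (hδ : 0 < δ)
    (hsplit : ∀ C : Set X, IsClosed C → 0 < μ C →
      ∃ C' ⊆ C, IsClosed C' ∧ 0 < μ C' ∧ ∀ p ∈ C', ∀ q ∈ C', d p q ≤ δ) :
    ∃ (I : Type) (_ : Countable I) (C : I → Set X),
      (Pairwise fun i j => Disjoint (C i) (C j)) ∧
      (∀ i, IsClosed (C i)) ∧
      (∀ i, 0 < μ (C i)) ∧
      (∀ i, ∀ p ∈ C i, ∀ q ∈ C i, d p q ≤ δ) ∧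
      μ (⋃ i, C i) = 1 ∧
      (∀ Y : Set X, MeasurableSet Y →
        μ Y = ∑' i, μ (C i) * (μ (Y ∩ C i) / μ (C i))) := by
  classical
  set Adm : Set X → Prop := fun C => IsClosed C ∧ 0 < μ C ∧ ∀ p ∈ C, ∀ q ∈ C, d p q ≤ δ with hAdm
  set S : Set (Set (Set X)) := {𝒞 | (∀ C ∈ 𝒞, Adm C) ∧ 𝒞.Pairwise Disjoint} with hS
  obtain ⟨𝒞, h𝒞max⟩ : ∃ 𝒞, Maximal (· ∈ S) 𝒞 := by
    apply zorn_subset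
    intro c hc hchain
    refine ⟨⋃₀ c, ⟨?_, ?_⟩, fun s hs => Set.subset_sUnion_of_mem hs⟩
    · rintro C ⟨𝒟, h𝒟, hC⟩
      exact (hc h𝒟).1 C hC
    · rintro A ⟨𝒟, h𝒟, hA⟩ B ⟨ℰ, hℰ, hB⟩ hAB
      rcases hchain.total h𝒟 hℰ with h | h
      · exact (hc hℰ).2 (h hA) hB hAB
      · exact (hc h𝒟).2 hA (h hB) hAB
  obtain ⟨h𝒞adm, h𝒞disj⟩ := h𝒞max.prop
  have hdisj : Pairwise (Function.onFun Disjoint fun C : 𝒞 => (C : Set X)) := by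
    intro i j hij
    exact h𝒞disj i.2 j.2 fun h => hij (Subtype.ext h)
  have hcl : ∀ C : 𝒞, IsClosed (C : Set X) := fun C => (h𝒞adm C C.2).1
  have hpos : ∀ C : 𝒞, 0 < μ (C : Set X) := fun C => (h𝒞adm C C.2).2.1
  have hcount : Countable 𝒞 := by
    rw [← Set.countable_univ_iff]
    have := Measure.countable_meas_pos_of_disjoint_iUnion (μ := μ)
      (As := fun C : 𝒞 => (C : Set X)) (fun C => (hcl C).measurableSet) hdisj
    exact this.mono fun C _ => hpos C
  set U : Set X := ⋃ C : 𝒞, (C : Set X) with hU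
  have hUmeas : MeasurableSet U := MeasurableSet.iUnion fun C => (hcl C).measurableSet
  have hUfull : μ U = 1 := by
    by_contra h
    have hlt : μ U < 1 := lt_of_le_of_ne prob_le_one h
    have hUc : 0 < μ Uᶜ := by
      rw [measure_compl hUmeas (measure_ne_top μ U), measure_univ]
      exact tsub_pos_of_lt hlt
    obtain ⟨K, hKU, hKcomp, hKpos⟩ := hUmeas.compl.exists_lt_isCompact hUc
    obtain ⟨C', hC'K, hC'cl, hC'pos, hC'diam⟩ := hsplit K hKcomp.isClosed hKpos
    have hC'dis : ∀ C ∈ 𝒞, Disjoint C' C := by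
      intro C hC
      refine Set.disjoint_left.2 fun x hxC' hxC => ?_
      exact (hKU (hC'K hxC')) (Set.mem_iUnion.2 ⟨⟨C, hC⟩, hxC⟩)
    have hC'new : C' ∉ 𝒞 := by
      intro hmem
      have : C' = ∅ := disjoint_self.1 (hC'dis C' hmem)
      rw [this] at hC'pos
      simp at hC'pos
    have hins : insert C' 𝒞 ∈ S := by
      constructor
      · rintro C (rfl | hC)
        · exact ⟨hC'cl, hC'pos, hC'diam⟩
        · exact h𝒞adm C hC
      · intro A hA B hB hAB
        rcases hA with rfl | hA <;> rcases hB with rfl | hB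
        · exact absurd rfl hAB
        · exact hC'dis B hB
        · exact (hC'dis A hA).symm
        · exact h𝒞disj hA hB hAB
    exact hC'new (h𝒞max.2 hins (Set.subset_insert C' 𝒞) (Set.mem_insert C' 𝒞))
  obtain ⟨f, hf⟩ : ∃ f : 𝒞 → ℕ, Function.Injective f := by
    rcases isEmpty_or_nonempty 𝒞 with h | h
    · exact ⟨fun C => 0, fun a => (IsEmpty.false a).elim⟩
    · exact (countable_iff_exists_injective 𝒞).1 hcount
  let e : 𝒞 ≃ Set.range f := Equiv.ofInjective f hf
  refine ⟨Set.range f, inferInstance, fun n => (e.symm n : Set X), ?_, ?_, ?_, ?_, ?_, ?_⟩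
  · exact fun i j hij => hdisj (e.symm.injective.ne hij)
  · exact fun i => hcl _
  · exact fun i => hpos _
  · exact fun i => (h𝒞adm _ (e.symm i).2).2.2
  · rw [e.symm.surjective.iUnion_comp (fun C : 𝒞 => (C : Set X))]
    exact hUfull
  · intro Y hY
    have hUc0 : μ Uᶜ = 0 := by
      rw [measure_compl hUmeas (measure_ne_top μ U), hUfull, measure_univ, tsub_self]
    have key : ∀ i : Set.range f,
        μ ((e.symm i : Set X)) * (μ (Y ∩ (e.symm i : Set X)) / μ ((e.symm i : Set X)))
          = μ (Y ∩ (e.symm i : Set X)) :=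
      fun i => ENNReal.mul_div_cancel' (fun h => absurd h (hpos _).ne') fun h => absurd h (measure_ne_top μ _)
    calc μ Y = μ (Y ∩ U) := (measure_inter_conull hUc0).symm
      _ = μ (⋃ i : Set.range f, Y ∩ (e.symm i : Set X)) := by
          rw [← Set.inter_iUnion, e.symm.surjective.iUnion_comp (fun C : 𝒞 => (C : Set X))]
      _ = ∑' i : Set.range f, μ (Y ∩ (e.symm i : Set X)) := by
          refine measure_iUnion ?_ fun i => hY.inter (hcl _).measurableSet
          exact fun i j hij =>
            ((hdisj (e.symm.injective.ne hij)).mono Set.inter_subset_right Set.inter_subset_right)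
      _ = ∑' i, μ ((e.symm i : Set X)) * (μ (Y ∩ (e.symm i : Set X)) / μ ((e.symm i : Set X))) := by
          exact tsum_congr fun i => (key i).symm
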